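/- Let g be a graded Lie algebra with one-dimensional center, gradation g = ⊕_{k=1}^N g_k with N = 2N₀ even, and suppose B_l is non-degenerate on g/z(g) for l = λZ*, λ ≠ 0. Then the restriction of B_l to g_{N₀} × g_{N₀} is a non-degenerate alternating (symplectic) form, so dim g_{N₀} is even; choosing a Lagrangian subspace L ⊆ g_{N₀} for this form, m := L ⊕ (⊕_{k=N₀+1}^N g_k) is an Abelian ideal of g of dimension (dim g + 1)/2 with l([m,m]) = 0. -/

import Mathlib

open Module

lemma aux_finrank_biSup {K V : Type*} [DivisionRing K] [AddCommGroup V] [Module K V]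
    [FiniteDimensional K V] (gr : ℕ → Submodule K V) (hind : iSupIndep gr)
    (s : Finset ℕ) :
    Module.finrank K (⨆ k ∈ s, gr k : Submodule K V) = ∑ k ∈ s, Module.finrank K (gr k) := by
  classical
  induction s using Finset.induction_on with
  | empty => simp
  | insert _ _ ha ih =>
    rename_i a s
    rw [Finset.iSup_insert, Finset.sum_insert ha, ← ih]
    have hdisj : Disjoint (gr a) (⨆ k ∈ s, gr k : Submodule K V) := by
      refine (hind a).mono_right ?_
      exact iSup₂_le fun k hk => le_iSup₂_of_le k (fun h => ha (h ▸ hk)) le_rfl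
    have := Submodule.finrank_sup_add_finrank_inf_eq (gr a) (⨆ k ∈ s, gr k : Submodule K V)
    rw [hdisj.eq_bot, finrank_bot] at this
    omega

/-- Let `g` be a graded Lie algebra of dimension `2d+1` with one-dimensional center
`z(g) = g_N`, `N = 2N₀` even, with `B_l` non-degenerate on `g/z(g)` for `l = λZ*`, `λ ≠ 0`.
Then `B_l` restricted to `g_{N₀}` is a non-degenerate (symplectic) form, so `dim g_{N₀}` is
even; and for any Lagrangian subspace `L₀ ⊆ g_{N₀}`, the subspace
`m = L₀ ⊕ (⊕_{k=N₀+1}^N g_k)` is an Abelian ideal of `g` of dimension `d+1` on whose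
brackets `l` vanishes. -/
theorem graded_even_polarization {L : Type*} [LieRing L] [LieAlgebra ℝ L]
    [FiniteDimensional ℝ L]
    (gr : ℕ → Submodule ℝ L) (N N₀ d : ℕ)
    (hN : N = 2 * N₀) (hN₀ : 1 ≤ N₀)
    (hdimL : Module.finrank ℝ L = 2 * d + 1)
    (hinternal : DirectSum.IsInternal gr)
    (h0 : gr 0 = ⊥)
    (htop : ∀ k, N < k → gr k = ⊥)
    (hbr : ∀ k k' : ℕ, ∀ x ∈ gr k, ∀ y ∈ gr k', ⁅x, y⁆ ∈ gr (k + k'))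
    (hcenter : (LieAlgebra.center ℝ L).toSubmodule = gr N)
    (hdim : Module.finrank ℝ (gr N) = 1)
    (l : L →ₗ[ℝ] ℝ) (hlne : l ≠ 0)
    (hlvan : ∀ k, k ≠ N → ∀ x ∈ gr k, l x = 0)
    (hnd : ∀ x : L, (∀ y : L, l ⁅x, y⁆ = 0) → x ∈ (LieAlgebra.center ℝ L).toSubmodule) :
    (∀ x ∈ gr N₀, (∀ y ∈ gr N₀, l ⁅x, y⁆ = 0) → x = 0) ∧
    Even (Module.finrank ℝ (gr N₀)) ∧
    (∀ L₀ : Submodule ℝ L, L₀ ≤ gr N₀ →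
      Module.finrank ℝ L₀ = Module.finrank ℝ (gr N₀) / 2 →
      (∀ x ∈ L₀, ∀ y ∈ L₀, l ⁅x, y⁆ = 0) →
      (∃ I : LieIdeal ℝ L, I.toSubmodule = L₀ ⊔ ⨆ k ∈ Set.Icc (N₀ + 1) N, gr k) ∧
      (∀ x ∈ L₀ ⊔ ⨆ k ∈ Set.Icc (N₀ + 1) N, gr k,
        ∀ y ∈ L₀ ⊔ ⨆ k ∈ Set.Icc (N₀ + 1) N, gr k, ⁅x, y⁆ = 0) ∧
      Module.finrank ℝ (L₀ ⊔ ⨆ k ∈ Set.Icc (N₀ + 1) N, gr k : Submodule ℝ L) = d + 1 ∧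
      (∀ x ∈ L₀ ⊔ ⨆ k ∈ Set.Icc (N₀ + 1) N, gr k,
        ∀ y ∈ L₀ ⊔ ⨆ k ∈ Set.Icc (N₀ + 1) N, gr k, l ⁅x, y⁆ = 0)) := by
  classical
  have hne : N₀ ≠ N := by omega
  have hiSup_top : (⨆ k, gr k : Submodule ℝ L) = ⊤ := hinternal.submodule_iSup_eq_top
  have hind : iSupIndep gr := hinternal.submodule_iSupIndep
  -- induction principle over all of L
  have hLind : ∀ (p : L → Prop), p 0 → (∀ a b, p a → p b → p (a + b)) →
      (∀ k, ∀ z ∈ gr k, p z) → ∀ y : L, p y := by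
    intro p hp0 hadd hgr y
    have hy : y ∈ (⨆ k, gr k : Submodule ℝ L) := hiSup_top ▸ Submodule.mem_top
    exact Submodule.iSup_induction (motive := p) gr hy hgr hp0 hadd
  -- pairing nondegeneracy
  have hpair : ∀ k, k ≠ N → ∀ x ∈ gr k, (∀ y ∈ gr (N - k), l ⁅x, y⁆ = 0) → x = 0 := by
    intro k hk x hx hy
    rcases le_or_gt k N with hkN | hkN
    · have hxc : x ∈ gr N := by
        rw [← hcenter]
        apply hnd
        refine hLind (fun y => l ⁅x, y⁆ = 0) (by simp) (fun a b ha hb => by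
          simp [lie_add, ha, hb]) ?_
        intro k' z hz
        by_cases hkk : k + k' = N
        · obtain rfl : k' = N - k := by omega
          exact hy z hz
        · exact hlvan (k + k') hkk _ (hbr k k' x hx z hz)
      have hmem : x ∈ (⨆ (j) (_ : j ≠ k), gr j : Submodule ℝ L) :=
        Submodule.mem_iSup_of_mem N (Submodule.mem_iSup_of_mem (Ne.symm hk) hxc)
      exact Submodule.disjoint_def.mp (hind k) x hx hmem
    · rw [htop k hkN] at hx
      exact hx
  -- part 1
  have part1 : ∀ x ∈ gr N₀, (∀ y ∈ gr N₀, l ⁅x, y⁆ = 0) → x = 0 := by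
    intro x hx h
    refine hpair N₀ hne x hx ?_
    have hNN : N - N₀ = N₀ := by omega
    rw [hNN]; exact h
  -- l is injective on gr N
  have hlN : ∀ w ∈ gr N, l w = 0 → w = 0 := by
    intro w hw hlw
    -- l does not vanish identically on gr N
    have hex : ∃ w₀ ∈ gr N, l w₀ ≠ 0 := by
      by_contra hcon
      push_neg at hcon
      apply hlne
      ext y
      show l y = 0
      refine hLind (fun y => l y = 0) (by simp) (fun a b ha hb => by simp [ha, hb]) ?_ y
      intro k z hz
      by_cases hk : k = N
      · exact hcon z (hk ▸ hz)
      · exact hlvan k hk z hz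
    obtain ⟨w₀, hw₀, hlw₀⟩ := hex
    set l' : (gr N) →ₗ[ℝ] ℝ := l.comp (gr N).subtype with hl'
    have hl'ne : l' ≠ 0 := by
      intro hc
      apply hlw₀
      have := congrArg (fun f => f ⟨w₀, hw₀⟩) hc
      simpa [l'] using this
    have hrk : finrank ℝ (LinearMap.range l') + finrank ℝ (LinearMap.ker l') = 1 := by
      rw [← hdim]; exact LinearMap.finrank_range_add_finrank_ker l'
    have hrange : LinearMap.range l' ≠ ⊥ := by
      intro hc
      apply hl'ne
      ext v
      have : l' v ∈ LinearMap.range l' := LinearMap.mem_range_self l' v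
      rw [hc] at this
      simpa using this
    have hrpos : finrank ℝ (LinearMap.range l') ≠ 0 := by
      intro hc
      exact hrange (Submodule.finrank_eq_zero.mp hc)
    have hker : finrank ℝ (LinearMap.ker l') = 0 := by omega
    have hkerbot : LinearMap.ker l' = ⊥ := Submodule.finrank_eq_zero.mp hker
    have : (⟨w, hw⟩ : gr N) ∈ LinearMap.ker l' := by
      simp [l', hlw]
    rw [hkerbot] at this
    simpa using Subtype.ext_iff.mp this
  -- dim symmetry
  have hle : ∀ k, k ≠ N → k ≤ N → finrank ℝ (gr k) ≤ finrank ℝ (gr (N - k)) := by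
    intro k hk hkN
    let f : (gr k) →ₗ[ℝ] Module.Dual ℝ (gr (N - k)) :=
      { toFun := fun x =>
          { toFun := fun y => l ⁅(x : L), (y : L)⁆
            map_add' := fun y z => by simp [lie_add]
            map_smul' := fun c y => by simp [lie_smul] }
        map_add' := fun x z => by ext y; simp [add_lie]
        map_smul' := fun c x => by ext y; simp [smul_lie] }
    have hinj : Function.Injective f := by
      rw [injective_iff_map_eq_zero]
      intro x hfx
      ext
      refine hpair k hk x x.2 ?_
      intro y hy
      have := congrArg (fun g => g ⟨y, hy⟩) hfx
      simpa [f] using this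
    calc finrank ℝ (gr k) ≤ finrank ℝ (Module.Dual ℝ (gr (N - k))) :=
          LinearMap.finrank_le_finrank_of_injective hinj
      _ = finrank ℝ (gr (N - k)) := Subspace.dual_finrank_eq
  have hsym : ∀ k, 1 ≤ k → k ≤ N - 1 → finrank ℝ (gr k) = finrank ℝ (gr (N - k)) := by
    intro k h1 h2
    have hN2 : 2 ≤ N := by omega
    refine le_antisymm (hle k (by omega) (by omega)) ?_
    have := hle (N - k) (by omega) (by omega)
    rwa [Nat.sub_sub_self (by omega)] at this
  -- total dimension
  set T : ℕ → ℕ := fun k => finrank ℝ (gr k) with hT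
  have htotal : ∑ k ∈ Finset.range (N + 1), T k = 2 * d + 1 := by
    rw [← hdimL, ← aux_finrank_biSup gr hind (Finset.range (N + 1))]
    have : (⨆ k ∈ Finset.range (N + 1), gr k : Submodule ℝ L) = ⊤ := by
      rw [eq_top_iff, ← hiSup_top]
      refine iSup_le fun k => ?_
      rcases le_or_gt k N with h | h
      · exact le_iSup₂_of_le k (Finset.mem_range.mpr (by omega)) le_rfl
      · rw [htop k h]; exact bot_le
    rw [this, finrank_top]
  -- sum decomposition
  have hT0 : T 0 = 0 := by simp [hT, h0]
  have hTN : T N = 1 := hdim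
  have e2 : ∑ k ∈ Finset.range (N + 1), T k = T 0 + ∑ k ∈ Finset.Ioc 0 N, T k := by
    rw [show Finset.range (N + 1) = insert 0 (Finset.Ioc 0 N) by ext a; simp,
      Finset.sum_insert (by simp)]
  have e3 : ∑ k ∈ Finset.Ioc 0 N, T k
      = ∑ k ∈ Finset.Ioc 0 N₀, T k + ∑ k ∈ Finset.Ioc N₀ N, T k :=
    (Finset.sum_Ioc_consecutive T (by omega) (by omega)).symm
  have e4 : ∑ k ∈ Finset.Ioc 0 N₀, T k = ∑ k ∈ Finset.Ioc 0 (N₀ - 1), T k + T N₀ := by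
    have h1 : Finset.Ioc (N₀ - 1) N₀ = {N₀} := by ext a; simp; omega
    rw [← Finset.sum_Ioc_consecutive T (by omega : 0 ≤ N₀ - 1) (by omega : N₀ - 1 ≤ N₀), h1,
      Finset.sum_singleton]
  have e5 : ∑ k ∈ Finset.Ioc N₀ N, T k = ∑ k ∈ Finset.Ioc N₀ (N - 1), T k + T N := by
    have h1 : Finset.Ioc (N - 1) N = {N} := by ext a; simp; omega
    rw [← Finset.sum_Ioc_consecutive T (by omega : N₀ ≤ N - 1) (by omega : N - 1 ≤ N), h1,
      Finset.sum_singleton]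
  have e6 : ∑ k ∈ Finset.Ioc 0 (N₀ - 1), T k = ∑ k ∈ Finset.Ioc N₀ (N - 1), T k := by
    refine Finset.sum_nbij' (fun k => N - k) (fun k => N - k) ?_ ?_ ?_ ?_ ?_
    · intro a ha
      simp only [Finset.mem_Ioc] at ha ⊢
      omega
    · intro a ha
      simp only [Finset.mem_Ioc] at ha ⊢
      omega
    · intro a ha
      simp only [Finset.mem_Ioc] at ha
      show N - (N - a) = a
      omega
    · intro a ha
      simp only [Finset.mem_Ioc] at ha
      show N - (N - a) = a
      omega
    · intro a ha
      simp only [Finset.mem_Ioc] at ha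
      exact hsym a (by omega) (by omega)
  set S : ℕ := ∑ k ∈ Finset.Ioc N₀ (N - 1), T k with hS
  have hTN₀ : T N₀ + 2 * S + 1 = 2 * d + 1 := by omega
  have part2 : Even (T N₀) := ⟨d - S, by omega⟩
  refine ⟨part1, part2, ?_⟩
  intro L₀ hL₀le hL₀dim hLag
  set Ks : Submodule ℝ L := ⨆ k ∈ Set.Icc (N₀ + 1) N, gr k with hKs
  have hKle : ∀ j, N₀ + 1 ≤ j → gr j ≤ Ks := by
    intro j hj
    rcases le_or_gt j N with h | h
    · exact le_iSup₂_of_le j ⟨hj, h⟩ le_rfl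
    · rw [htop j h]; exact bot_le
  -- induction principle on Ks
  have hKind : ∀ (p : L → Prop), p 0 → (∀ a b, p a → p b → p (a + b)) →
      (∀ k, N₀ + 1 ≤ k → ∀ z ∈ gr k, p z) → ∀ b ∈ Ks, p b := by
    intro p hp0 hadd hgr b hb
    refine Submodule.iSup_induction (motive := p)
      (fun k => ⨆ (_ : k ∈ Set.Icc (N₀ + 1) N), gr k) hb ?_ hp0 hadd
    intro k z hz
    have hz' : z ∈ (⨆ (_ : k ∈ Set.Icc (N₀ + 1) N), gr k : Submodule ℝ L) := hz
    clear hz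
    by_cases hk : k ∈ Set.Icc (N₀ + 1) N
    · rw [iSup_pos hk] at hz'
      exact hgr k hk.1 z hz'
    · rw [iSup_neg hk] at hz'
      rename' hz' => hz
      simp only [Submodule.mem_bot] at hz
      rw [hz]; exact hp0
  -- brackets of high degree vanish
  have hbrK0 : ∀ k, N₀ ≤ k → ∀ x ∈ gr k, ∀ b ∈ Ks, ⁅x, b⁆ = 0 := by
    intro k hk x hx b hb
    refine hKind (fun b => ⁅x, b⁆ = 0) (by simp) (fun a b ha hb => by simp [lie_add, ha, hb])
      ?_ b hb
    intro k' hk' z hz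
    have := hbr k k' x hx z hz
    rw [htop (k + k') (by omega)] at this
    simpa using this
  -- abelian
  have habel : ∀ x ∈ L₀ ⊔ Ks, ∀ y ∈ L₀ ⊔ Ks, ⁅x, y⁆ = 0 := by
    intro x hx y hy
    obtain ⟨a, ha, b, hb, rfl⟩ := Submodule.mem_sup.mp hx
    obtain ⟨a', ha', b', hb', rfl⟩ := Submodule.mem_sup.mp hy
    have h1 : ⁅a, a'⁆ = 0 := by
      refine hlN _ ?_ (hLag a ha a' ha')
      have := hbr N₀ N₀ a (hL₀le ha) a' (hL₀le ha')
      rwa [show N₀ + N₀ = N by omega] at this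
    have h2 : ⁅a, b'⁆ = 0 := hbrK0 N₀ le_rfl a (hL₀le ha) b' hb'
    have h3 : ⁅b, a'⁆ = 0 := by
      have := hbrK0 N₀ le_rfl a' (hL₀le ha') b hb
      rw [← lie_skew, this, neg_zero]
    have h4 : ⁅b, b'⁆ = 0 := by
      refine hKind (fun z => ⁅z, b'⁆ = 0) (by simp) (fun u v hu hv => by simp [add_lie, hu, hv])
        ?_ b hb
      intro k hk z hz
      exact hbrK0 k (by omega) z hz b' hb'
    rw [lie_add, add_lie, add_lie, h1, h2, h3, h4]
    simp
  -- ideal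
  have hideal : ∀ (x : L), ∀ m ∈ L₀ ⊔ Ks, ⁅x, m⁆ ∈ L₀ ⊔ Ks := by
    intro x m hm
    refine hLind (fun x => ⁅x, m⁆ ∈ L₀ ⊔ Ks) (by simp) (fun u v hu hv =>
      show ⁅u + v, m⁆ ∈ L₀ ⊔ Ks by rw [add_lie]; exact Submodule.add_mem _ hu hv) ?_ x
    intro k z hz
    rcases Nat.eq_zero_or_pos k with hk0 | hk1
    · rw [hk0, h0] at hz
      simp only [Submodule.mem_bot] at hz
      rw [hz, zero_lie]; exact Submodule.zero_mem _
    obtain ⟨a, ha, b, hb, rfl⟩ := Submodule.mem_sup.mp hm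
    rw [lie_add]
    refine Submodule.add_mem _ ?_ ?_
    · have := hbr k N₀ z hz a (hL₀le ha)
      exact Submodule.mem_sup_right (hKle (k + N₀) (by omega) this)
    · refine hKind (fun b => ⁅z, b⁆ ∈ L₀ ⊔ Ks) (by simp) (fun u v hu hv =>
        show ⁅z, u + v⁆ ∈ L₀ ⊔ Ks by rw [lie_add]; exact Submodule.add_mem _ hu hv) ?_ b hb
      intro k' hk' w hw
      exact Submodule.mem_sup_right (hKle (k + k') (by omega) (hbr k k' z hz w hw))
  refine ⟨⟨{ toSubmodule := (L₀ ⊔ Ks : Submodule ℝ L),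
             lie_mem := fun {x} {m} hm => hideal x m hm }, rfl⟩, habel, ?_, ?_⟩
  -- dimension
  · have hKeq : Ks = ⨆ k ∈ Finset.Icc (N₀ + 1) N, gr k := by
      apply le_antisymm
      · exact iSup₂_le fun k hk => le_iSup₂_of_le k (Finset.mem_Icc.mpr ⟨hk.1, hk.2⟩) le_rfl
      · refine iSup₂_le fun k hk => ?_
        have h := Finset.mem_Icc.mp hk
        exact le_iSup₂_of_le k ⟨h.1, h.2⟩ le_rfl
    have hKrank : finrank ℝ Ks = ∑ k ∈ Finset.Icc (N₀ + 1) N, T k := by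
      rw [hKeq]; exact aux_finrank_biSup gr hind _
    have hIccIoc : Finset.Icc (N₀ + 1) N = Finset.Ioc N₀ N := by
      ext a; simp [Finset.mem_Icc, Finset.mem_Ioc]
    rw [hIccIoc] at hKrank
    have hdisj : Disjoint L₀ Ks := by
      refine (hind N₀).mono hL₀le ?_
      refine iSup₂_le fun k hk => ?_
      exact le_iSup₂_of_le k (by rintro rfl; exact absurd hk.1 (by omega)) le_rfl
    have := Submodule.finrank_sup_add_finrank_inf_eq L₀ Ks
    rw [hdisj.eq_bot, finrank_bot] at this
    have hL₀' : finrank ℝ L₀ = T N₀ / 2 := hL₀dim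
    omega
  · intro x hx y hy
    rw [habel x hx y hy]
    simp
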